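/- For every pair of vectors v, w ∈ ℤ⁵, the concatenated vector (v, w) ∈ ℤ¹⁰ lies in the ℤ-span of the columns of K if and only if the vector v + w·i ∈ ℤ[i]⁵ lies in the ℤ[i]-span of the columns of K̄. -/
import Mathlib


open Matrix

/-- The 5×5 integer matrix `D` with `D j k = 1` if `j = k`, `-1` if `j - k ≡ ±1 (mod 5)`,
and `0` otherwise. -/
def Dmat : Matrix (Fin 5) (Fin 5) ℤ := fun j k =>
  if j = k then 1
  else if (j : ZMod 5) - (k : ZMod 5) = 1 ∨ (j : ZMod 5) - (k : ZMod 5) = -1 then -1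
  else 0

/-- The 10×10 symmetric integer block matrix `K = [[I₅, D], [D, -I₅]]`, with row and
column index set `Fin 5 ⊕ Fin 5` (so that `ℤ¹⁰` is `Fin 5 ⊕ Fin 5 → ℤ`). -/
def Kmat : Matrix (Fin 5 ⊕ Fin 5) (Fin 5 ⊕ Fin 5) ℤ :=
  Matrix.fromBlocks 1 Dmat Dmat (-1)

/-- The Gaussian integer `i`. -/
def gi : GaussianInt := ⟨0, 1⟩

/-- `K̄ = I₅ + i • D`, a symmetric 5×5 matrix over the Gaussian integers:
`1 + i` on the diagonal, `-i` in positions with `j - k ≡ ±1 (mod 5)`, `0` elsewhere. -/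
noncomputable def Kbar : Matrix (Fin 5) (Fin 5) GaussianInt :=
  1 + gi • (Dmat.map (Int.cast : ℤ → GaussianInt))

lemma Kbar_entry (j k : Fin 5) : Kbar j k = ⟨(1 : Matrix (Fin 5) (Fin 5) ℤ) j k, Dmat j k⟩ := by
  apply Zsqrtd.ext <;>
  simp [Kbar, gi, Matrix.one_apply, Zsqrtd.ext_iff, Matrix.add_apply, Matrix.smul_apply,
    Matrix.map_apply] <;> split <;> simp

lemma key (x y : Fin 5 → ℤ) :
    Kbar.mulVec (fun j => ⟨x j, -y j⟩) =
      fun j => ⟨Kmat.mulVec (Sum.elim x y) (Sum.inl j), Kmat.mulVec (Sum.elim x y) (Sum.inr j)⟩ := by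
  funext j
  apply Zsqrtd.ext <;>
  · simp only [Matrix.mulVec, dotProduct, Kmat, Matrix.fromBlocks, Kbar_entry,
      Fintype.sum_sum_type, Sum.elim_inl, Sum.elim_inr, Matrix.of_apply, Sum.elim_inl,
      Fin.sum_univ_five, Zsqrtd.re_mul, Zsqrtd.im_mul, Zsqrtd.re_add, Zsqrtd.im_add,
      Matrix.one_apply, Matrix.neg_apply]
    ring

/-- for all `v, w ∈ ℤ⁵`, the concatenated vector `(v, w) ∈ ℤ¹⁰` lies in the
ℤ-span of the columns of `K` iff `v + w·i ∈ ℤ[i]⁵` lies in the ℤ[i]-span of the columns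
of `K̄`. -/
theorem stmt_4 (v w : Fin 5 → ℤ) :
    Sum.elim v w ∈ LinearMap.range Kmat.mulVecLin ↔
      (fun j => (v j : GaussianInt) + (w j : GaussianInt) * gi) ∈
        LinearMap.range Kbar.mulVecLin := by
  constructor
  · rintro ⟨u, hu⟩
    refine ⟨fun j => ⟨u (Sum.inl j), -u (Sum.inr j)⟩, ?_⟩
    have hk := key (fun j => u (Sum.inl j)) (fun j => u (Sum.inr j))
    have he : Sum.elim (fun j => u (Sum.inl j)) (fun j => u (Sum.inr j)) = u := by
      funext s; cases s <;> rfl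
    rw [he] at hk
    rw [Matrix.mulVecLin_apply, hk]
    funext j
    apply Zsqrtd.ext <;>
    · have h1 := congrFun hu (Sum.inl j)
      have h2 := congrFun hu (Sum.inr j)
      simp only [Matrix.mulVecLin_apply] at h1 h2
      simp [gi, h1, h2]
  · rintro ⟨z, hz⟩
    refine ⟨Sum.elim (fun j => (z j).re) (fun j => -(z j).im), ?_⟩
    have hk := key (fun j => (z j).re) (fun j => -(z j).im)
    have hz' : (fun j => (⟨(z j).re, -(-(z j).im)⟩ : GaussianInt)) = z := by
      funext j; apply Zsqrtd.ext <;> simp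
    rw [hz'] at hk
    rw [Matrix.mulVecLin_apply] at hz
    rw [hk] at hz
    rw [Matrix.mulVecLin_apply]
    funext s
    cases s with
    | inl j =>
      have := congrFun hz j
      have hre := congrArg Zsqrtd.re this
      simpa [gi] using hre
    | inr j =>
      have := congrFun hz j
      have him := congrArg Zsqrtd.im this
      simpa [gi] using him
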